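/- There exists an absolute constant c > 0 such that for every integer m ≥ 2 there exist an integer t with t ≥ c·log m and t tuples S₁, …, S_t : Fin m → ℝ² such that the set {S₁, …, S_t} is shattered by the family of Hausdorff metric balls centered at single points: for every subset A ⊆ {1, …, t} there exist a point p ∈ ℝ² and a radius r > 0 such that for every i ∈ {1, …, t}, the Hausdorff distance between the finite point set {(S_i)₁, …, (S_i)_m} and the singleton {p} is at most r if and only if i ∈ A. Consequently, the VC dimension of the range space on m-tuples of points of ℝ² whose ranges are Hausdorff metric balls (with centers of any fixed complexity k ≥ 1) is Ω(log m). -/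

import Mathlib

open Metric

noncomputable section VCAux

/-- A rational parametrization of the unit circle in `ℝ²`. -/
noncomputable def vcPt (s : ℝ) : EuclideanSpace ℝ (Fin 2) :=
  (WithLp.equiv 2 (Fin 2 → ℝ)).symm ![(1 - s ^ 2) / (1 + s ^ 2), 2 * s / (1 + s ^ 2)]

lemma vcPt_norm (s : ℝ) : ‖vcPt s‖ = 1 := by
  have hs : (0:ℝ) < 1 + s ^ 2 := by positivity
  rw [EuclideanSpace.norm_eq]
  rw [show (1:ℝ) = Real.sqrt 1 from (Real.sqrt_one).symm]
  congr 1
  rw [Fin.sum_univ_two]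
  simp only [vcPt, WithLp.equiv_symm_apply, WithLp.ofLp_toLp, Matrix.cons_val_zero, Matrix.cons_val_one,
    Matrix.head_cons, Real.norm_eq_abs, sq_abs]
  field_simp
  ring

lemma vcPt_inj {a b : ℝ} (ha : 0 ≤ a) (hb : 0 ≤ b) (h : vcPt a = vcPt b) : a = b := by
  have ha' : (0:ℝ) < 1 + a ^ 2 := by positivity
  have hb' : (0:ℝ) < 1 + b ^ 2 := by positivity
  have h0 : vcPt a 0 = vcPt b 0 := by rw [h]
  simp only [vcPt, WithLp.equiv_symm_apply, WithLp.ofLp_toLp, Matrix.cons_val_zero] at h0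
  rw [div_eq_div_iff (ne_of_gt ha') (ne_of_gt hb')] at h0
  have hsq : a ^ 2 = b ^ 2 := by nlinarith
  calc a = Real.sqrt (a ^ 2) := (Real.sqrt_sq ha).symm
    _ = Real.sqrt (b ^ 2) := by rw [hsq]
    _ = b := Real.sqrt_sq hb

lemma vc_norm_add_lt {x y : EuclideanSpace ℝ (Fin 2)} (hx : ‖x‖ = 1) (hy : ‖y‖ = 1)
    (hxy : x ≠ y) : ‖x + y‖ < 2 := by
  have h1 : 0 < ‖x - y‖ := norm_pos_iff.2 (sub_ne_zero.2 hxy)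
  have h2 : ‖x - y‖ ^ 2 = ‖x‖ ^ 2 - 2 * inner ℝ x y + ‖y‖ ^ 2 := norm_sub_sq_real x y
  have h3 : ‖x + y‖ ^ 2 = ‖x‖ ^ 2 + 2 * inner ℝ x y + ‖y‖ ^ 2 := norm_add_sq_real x y
  have hin : (inner ℝ x y : ℝ) < 1 := by nlinarith
  nlinarith [norm_nonneg (x + y)]

end VCAux

/-- For every `m ≥ 2` there are `t = Ω(log m)` distinct `m`-tuples of points of `ℝ²`
shattered by the family of Hausdorff metric balls centered at single points: for every
subset `A` of the index set there are a center point `p` and a radius `r > 0` such that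
the `i`-th point set lies in the corresponding Hausdorff ball exactly when `i ∈ A`.
Hence the VC dimension of the range space of Hausdorff metric balls on `m`-tuples
is `Ω(log m)`. -/
theorem vc_hausdorff_lower_log_m :
    ∃ c : ℝ, 0 < c ∧ ∀ m : ℕ, 2 ≤ m →
      ∃ t : ℕ, c * Real.log m ≤ (t : ℝ) ∧
        ∃ S : Fin t → (Fin m → EuclideanSpace ℝ (Fin 2)), Function.Injective S ∧
          ∀ A : Finset (Fin t),
            ∃ (p : EuclideanSpace ℝ (Fin 2)) (r : ℝ), 0 < r ∧
              ∀ i : Fin t,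
                (Metric.hausdorffDist (Set.range (S i))
                    ({p} : Set (EuclideanSpace ℝ (Fin 2))) ≤ r ↔ i ∈ A) := by
  have hlog2 : 0 < Real.log 2 := Real.log_pos one_lt_two
  refine ⟨1 / (2 * Real.log 2), by positivity, ?_⟩
  intro m hm
  set t := Nat.log 2 m with ht_def
  have ht1 : 1 ≤ t := Nat.log_pos one_lt_two hm
  refine ⟨t, ?_, ?_⟩
  · -- logarithmic lower bound
    have hm0 : (0:ℝ) < m := by positivity
    have hlt : (m : ℝ) < 2 ^ (t + 1) := by
      exact_mod_cast Nat.lt_pow_succ_log_self one_lt_two m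
    have h1 : Real.log m ≤ (t + 1) * Real.log 2 := by
      calc Real.log m ≤ Real.log (2 ^ (t + 1)) :=
            Real.log_le_log (by positivity) (le_of_lt hlt)
        _ = (t + 1) * Real.log 2 := by
            rw [Real.log_pow]; push_cast; ring
    have h2 : ((t:ℝ) + 1) ≤ 2 * t := by
      have : (1:ℝ) ≤ t := by exact_mod_cast ht1
      linarith
    have h3 : Real.log m ≤ 2 * t * Real.log 2 := by nlinarith
    rw [div_mul_eq_mul_div, one_mul, div_le_iff₀ (by positivity)]
    nlinarith
  · -- the construction
    classical
    have hcardF : Fintype.card (Finset (Fin t)) = 2 ^ t := by simp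
    let e : Finset (Fin t) ≃ Fin (2 ^ t) := Fintype.equivFinOfCardEq hcardF
    let u : Finset (Fin t) → EuclideanSpace ℝ (Fin 2) := fun B => vcPt ((e B : ℕ) : ℝ)
    have hu_norm : ∀ B, ‖u B‖ = 1 := fun B => vcPt_norm _
    have hu_inj : Function.Injective u := by
      intro B C h
      have : ((e B : ℕ) : ℝ) = ((e C : ℕ) : ℝ) :=
        vcPt_inj (by positivity) (by positivity) h
      have : (e B : ℕ) = (e C : ℕ) := by exact_mod_cast this
      exact e.injective (Fin.val_injective this)
    have hpow_le : 2 ^ t ≤ m := Nat.pow_log_le_self 2 (by omega)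
    have hpow_pos : 0 < 2 ^ t := Nat.pow_pos (n := t) (by norm_num)
    let dec : Fin m → Finset (Fin t) := fun j =>
      e.symm ⟨(j : ℕ) % 2 ^ t, Nat.mod_lt _ hpow_pos⟩
    have hdec_surj : Function.Surjective dec := by
      intro B
      refine ⟨⟨(e B : ℕ), lt_of_lt_of_le (e B).isLt hpow_le⟩, ?_⟩
      have : ((e B : ℕ)) % 2 ^ t = (e B : ℕ) := Nat.mod_eq_of_lt (e B).isLt
      simp only [dec, this]
      rw [show (⟨(e B : ℕ), (e B).isLt⟩ : Fin (2 ^ t)) = e B from Fin.ext rfl]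
      exact e.symm_apply_apply B
    let S : Fin t → Fin m → EuclideanSpace ℝ (Fin 2) := fun i j => u ((dec j).erase i)
    have hrange : ∀ i, Set.range (S i) = u '' {B : Finset (Fin t) | i ∉ B} := by
      intro i
      ext x
      constructor
      · rintro ⟨j, rfl⟩
        exact ⟨(dec j).erase i, Finset.notMem_erase i _, rfl⟩
      · rintro ⟨B, hB, rfl⟩
        obtain ⟨j, rfl⟩ := hdec_surj B
        exact ⟨j, by simp only [S, Finset.erase_eq_of_notMem hB]⟩
    refine ⟨S, ?_, ?_⟩
    · -- injectivity
      intro i i' h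
      by_contra hne
      have h1 : u {i'} ∈ Set.range (S i) := by
        rw [hrange i]
        exact ⟨{i'}, by simpa using hne, rfl⟩
      rw [show Set.range (S i) = Set.range (S i') from by rw [h], hrange i'] at h1
      obtain ⟨B, hB, hBeq⟩ := h1
      have : B = {i'} := hu_inj hBeq
      rw [this] at hB
      exact hB (Finset.mem_singleton_self i')
    · -- shattering
      intro A
      set p : EuclideanSpace ℝ (Fin 2) := -u A with hp
      have key : ∀ B : Finset (Fin t), B ≠ A → dist (u B) p < 2 := by
        intro B hBA
        rw [dist_eq_norm, hp, sub_neg_eq_add]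
        exact vc_norm_add_lt (hu_norm B) (hu_norm A) (fun hc => hBA (hu_inj hc))
      have hdA : dist (u A) p = 2 := by
        rw [dist_eq_norm, hp, sub_neg_eq_add, ← two_smul ℝ, norm_smul, hu_norm A]
        norm_num
      -- a subset different from A exists
      obtain ⟨B0, hB0⟩ : ∃ B : Finset (Fin t), B ≠ A := by
        refine Fintype.exists_ne_of_one_lt_card ?_ A
        rw [hcardF]
        calc 1 < 2 ^ 1 := by norm_num
          _ ≤ 2 ^ t := Nat.pow_le_pow_right (by norm_num) ht1
      set Q : Finset (Finset (Fin t)) := Finset.univ.erase A with hQdef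
      have hQ : Q.Nonempty := ⟨B0, Finset.mem_erase.2 ⟨hB0, Finset.mem_univ _⟩⟩
      set base : ℝ := Q.sup' hQ (fun B => dist (u B) p) with hbase_def
      have hbase_lt : base < 2 :=
        (Finset.sup'_lt_iff hQ).2 fun B hB => key B (Finset.ne_of_mem_erase hB)
      have hbase0 : 0 ≤ base :=
        le_trans dist_nonneg (Finset.le_sup' (fun B => dist (u B) p) hQ.choose_spec)
      refine ⟨p, (base + 2) / 2, by linarith, ?_⟩
      intro i
      by_cases hi : i ∈ A
      · simp only [hi, iff_true]
        apply Metric.hausdorffDist_le_of_mem_dist (by linarith)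
        · intro x hx
          rw [hrange i] at hx
          obtain ⟨B, hB, rfl⟩ := hx
          refine ⟨p, Set.mem_singleton p, ?_⟩
          have hBA : B ≠ A := fun hc => hB (hc ▸ hi)
          have : dist (u B) p ≤ base :=
            Finset.le_sup' (fun B => dist (u B) p)
              (Finset.mem_erase.2 ⟨hBA, Finset.mem_univ _⟩)
          linarith
        · intro y hy
          rw [Set.mem_singleton_iff] at hy
          subst hy
          refine ⟨u ∅, ?_, ?_⟩
          · rw [hrange i]; exact ⟨∅, Finset.notMem_empty i, rfl⟩
          · have hne : (∅ : Finset (Fin t)) ≠ A := by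
              intro hc; rw [← hc] at hi; exact Finset.notMem_empty i hi
            have : dist (u ∅) p ≤ base :=
              Finset.le_sup' (fun B => dist (u B) p)
                (Finset.mem_erase.2 ⟨hne, Finset.mem_univ _⟩)
            rw [dist_comm]
            linarith
      · simp only [hi, iff_false]
        intro hle
        have hmem : u A ∈ Set.range (S i) := by
          rw [hrange i]; exact ⟨A, hi, rfl⟩
        have hne_top : EMetric.hausdorffEdist (Set.range (S i))
            ({p} : Set (EuclideanSpace ℝ (Fin 2))) ≠ ⊤ :=
          Metric.hausdorffEdist_ne_top_of_nonempty_of_bounded ⟨u A, hmem⟩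
            (Set.singleton_nonempty p) (Set.finite_range (S i)).isBounded
            Bornology.isBounded_singleton
        have h2le := Metric.infDist_le_hausdorffDist_of_mem hmem hne_top
        rw [Metric.infDist_singleton, hdA] at h2le
        linarith
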